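/- Let λ > 1 be a real number that is algebraic over ℚ, with minimal polynomial P over ℚ. Suppose P has a complex root of absolute value 1. Then λ⁻¹ is also a root of P (equivalently, P is reciprocal), so λ and λ⁻¹ are Galois conjugates, the field extension ℚ(λ) : ℚ(λ + λ⁻¹) has degree 2, and if λ + λ⁻¹ has degree d over ℚ then λ has degree 2d over ℚ. -/

import Mathlib

open IntermediateField Polynomial

set_option maxHeartbeats 1000000 in
set_option synthInstance.maxHeartbeats 200000 in
/-- If `λ > 1` is a real algebraic number whose minimal polynomial over `ℚ` has a complex
root of absolute value `1`, then `λ⁻¹` is also a root of that minimal polynomial (so `λ`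
and `λ⁻¹` are Galois conjugates, i.e. have the same minimal polynomial), the field
extension `ℚ(λ) : ℚ(λ + λ⁻¹)` has degree `2`, and the degree of `λ` over `ℚ` is twice the
degree of `λ + λ⁻¹` over `ℚ`. -/
theorem nonsplitting_from_root_on_unit_circle
    (lam : ℝ) (hlam : 1 < lam) (halg : IsAlgebraic ℚ lam)
    (hcirc : ∃ z : ℂ, ‖z‖ = 1 ∧ Polynomial.aeval z (minpoly ℚ lam) = 0) :
    Polynomial.aeval lam⁻¹ (minpoly ℚ lam) = 0 ∧
    minpoly ℚ lam⁻¹ = minpoly ℚ lam ∧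
    Module.finrank (↥(ℚ⟮lam + lam⁻¹⟯ : IntermediateField ℚ ℝ))
      ↥((ℚ⟮lam + lam⁻¹⟯ : IntermediateField ℚ ℝ)⟮lam⟯) = 2 ∧
    (minpoly ℚ lam).natDegree = 2 * (minpoly ℚ (lam + lam⁻¹)).natDegree := by
  have hlam0 : lam ≠ 0 := by positivity
  have hint : IsIntegral ℚ lam := halg.isIntegral
  set P := minpoly ℚ lam with hP
  have hPmonic : P.Monic := minpoly.monic hint
  have hPne : P ≠ 0 := minpoly.ne_zero hint
  obtain ⟨z, hz1, hz0⟩ := hcirc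
  have hzne : z ≠ 0 := by
    intro h; rw [h] at hz1; simp at hz1
  -- conj z is a root
  have hconj : aeval ((starRingEnd ℂ) z) P = 0 := by
    have := Polynomial.aeval_algHom_apply
      ((Complex.conjAe.toAlgHom).restrictScalars ℚ) z P
    simpa [hz0] using this
  have hzinv : aeval z⁻¹ P = 0 := by
    rw [Complex.inv_eq_conj (by exact hz1)]
    exact hconj
  -- P is the minpoly of z⁻¹
  have hPirr : Irreducible P := minpoly.irreducible hint
  have hPz : minpoly ℚ z⁻¹ = P := (minpoly.eq_of_irreducible_of_monic (p := P) hPirr hzinv hPmonic).symm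
  -- z⁻¹ is a root of reverse P
  have hrev : aeval z⁻¹ P.reverse = 0 := by
    letI := invertibleOfNonzero hzne
    have := (Polynomial.eval₂_reverse_eq_zero_iff (algebraMap ℚ ℂ) z P).mpr hz0
    rwa [invOf_eq_inv, ← aeval_def] at this
  have hdvd : P ∣ P.reverse := hPz ▸ minpoly.dvd ℚ z⁻¹ (p := P.reverse) hrev
  -- lam is a root of reverse P (since reverse P = P * constant)
  obtain ⟨q, hq⟩ := hdvd
  have hrevlam : aeval lam P.reverse = 0 := by
    have hrevne : P.reverse ≠ 0 := fun h => hPne (Polynomial.reverse_eq_zero.mp h)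
    have hqne : q ≠ 0 := fun h => hrevne (by rw [hq, h, mul_zero])
    have hqdeg : q.natDegree = 0 := by
      have h2 := Polynomial.reverse_natDegree_le P
      have h3 : P.natDegree + q.natDegree ≤ P.natDegree := by
        rw [← Polynomial.natDegree_mul hPne hqne, ← hq]
        exact h2
      omega
    obtain ⟨a, ha⟩ := Polynomial.natDegree_eq_zero.mp hqdeg
    rw [hq, ← ha, map_mul, minpoly.aeval, zero_mul]
  have h1 : aeval lam⁻¹ P = 0 := by
    letI := invertibleOfNonzero (inv_ne_zero hlam0)
    have := (Polynomial.eval₂_reverse_eq_zero_iff (algebraMap ℚ ℝ) lam⁻¹ P).mp ?_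
    · rwa [← aeval_def] at this
    · rwa [invOf_eq_inv, inv_inv, ← aeval_def]
  refine ⟨h1, (minpoly.eq_of_irreducible_of_monic (p := P) hPirr h1 hPmonic).symm, ?_⟩
  -- setup
  have hinvint : IsIntegral ℚ lam⁻¹ := ⟨P, hPmonic, by rwa [aeval_def] at h1⟩
  have hμint : IsIntegral ℚ (lam + lam⁻¹) := hint.add hinvint
  -- lam is not in ℚ⟮lam + lam⁻¹⟯
  have hnotmem : lam ∉ (ℚ⟮lam + lam⁻¹⟯ : IntermediateField ℚ ℝ) := by
    intro hmem
    have h' : lam ∈ (ℚ⟮lam + lam⁻¹⟯ : IntermediateField ℚ ℝ).toSubalgebra := hmem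
    rw [IntermediateField.adjoin_simple_toSubalgebra_of_isAlgebraic hμint.isAlgebraic,
      Algebra.adjoin_singleton_eq_range_aeval] at h'
    obtain ⟨q, hq2⟩ := h'
    have hq2' : (aeval (lam + lam⁻¹)) q = lam := hq2
    set pb := IntermediateField.adjoin.powerBasis hint with hpb
    have hgenmin : minpoly ℚ pb.gen = P := IntermediateField.minpoly_gen ℚ lam
    have hroot : aeval lam⁻¹ (minpoly ℚ pb.gen) = 0 := by rw [hgenmin]; exact h1
    set σ : ℚ⟮lam⟯ →ₐ[ℚ] ℝ := pb.lift lam⁻¹ hroot with hσ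
    have hσgen : σ pb.gen = lam⁻¹ := pb.lift_gen lam⁻¹ hroot
    have hcoe : (pb.gen : ℝ) = lam :=
      IntermediateField.AdjoinSimple.algebraMap_gen ℚ lam
    set m : (ℚ⟮lam⟯ : IntermediateField ℚ ℝ) := pb.gen + pb.gen⁻¹ with hm
    have hmcoe : (m : ℝ) = lam + lam⁻¹ := by
      rw [hm]
      push_cast [IntermediateField.coe_inv]
      rw [hcoe]
    have hσm : σ m = lam + lam⁻¹ := by
      rw [hm, map_add, hσgen, map_inv₀, hσgen, inv_inv, add_comm]
    have hE : ((aeval m q : (ℚ⟮lam⟯ : IntermediateField ℚ ℝ)) : ℝ) = lam := by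
      have h5 := Polynomial.aeval_algHom_apply
        (ℚ⟮lam⟯ : IntermediateField ℚ ℝ).val m q
      rw [show (ℚ⟮lam⟯ : IntermediateField ℚ ℝ).val m = lam + lam⁻¹ from hmcoe] at h5
      rw [show ((aeval m q : (ℚ⟮lam⟯ : IntermediateField ℚ ℝ)) : ℝ)
        = (ℚ⟮lam⟯ : IntermediateField ℚ ℝ).val (aeval m q) from rfl, ← h5, hq2']
    have hEg : (aeval m q : (ℚ⟮lam⟯ : IntermediateField ℚ ℝ)) = pb.gen :=
      Subtype.ext (by rw [hE, hcoe])
    have h6 : σ pb.gen = lam := by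
      rw [← hEg, ← Polynomial.aeval_algHom_apply σ m q, hσm, hq2']
    rw [hσgen] at h6
    have : lam⁻¹ < 1 := inv_lt_one_of_one_lt₀ hlam
    linarith
  -- degree 2 over K
  have hintK : IsIntegral (ℚ⟮lam + lam⁻¹⟯ : IntermediateField ℚ ℝ) lam := hint.tower_top
  set μK : (ℚ⟮lam + lam⁻¹⟯ : IntermediateField ℚ ℝ) :=
    IntermediateField.AdjoinSimple.gen ℚ (lam + lam⁻¹) with hμK
  have hμKcoe : algebraMap (ℚ⟮lam + lam⁻¹⟯ : IntermediateField ℚ ℝ) ℝ μK = lam + lam⁻¹ :=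
    IntermediateField.AdjoinSimple.algebraMap_gen ℚ (lam + lam⁻¹)
  set q2 : Polynomial (ℚ⟮lam + lam⁻¹⟯ : IntermediateField ℚ ℝ) :=
    X ^ 2 - C μK * X + 1 with hq2def
  have hq2deg : q2.natDegree = 2 := by
    unfold q2
    compute_degree!
  have hq2ne : q2 ≠ 0 := fun h => by simp [h] at hq2deg
  have hq2root : aeval lam q2 = 0 := by
    rw [hq2def]
    simp only [map_add, map_sub, map_mul, map_pow, map_one, aeval_X, aeval_C, hμKcoe]
    field_simp
    ring
  have hdvd2 : minpoly (ℚ⟮lam + lam⁻¹⟯ : IntermediateField ℚ ℝ) lam ∣ q2 :=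
    minpoly.dvd _ lam hq2root
  have hdeg_le : (minpoly (ℚ⟮lam + lam⁻¹⟯ : IntermediateField ℚ ℝ) lam).natDegree ≤ 2 :=
    hq2deg ▸ Polynomial.natDegree_le_of_dvd hdvd2 hq2ne
  have hdeg_pos := minpoly.natDegree_pos hintK
  have hdeg_ne1 : (minpoly (ℚ⟮lam + lam⁻¹⟯ : IntermediateField ℚ ℝ) lam).natDegree ≠ 1 := by
    intro h
    obtain ⟨c, hc⟩ := minpoly.natDegree_eq_one_iff.mp h
    have hc2 : (c : ℝ) ∈ (ℚ⟮lam + lam⁻¹⟯ : IntermediateField ℚ ℝ) := c.2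
    rw [show ((c : ℝ)) = lam from hc] at hc2
    exact hnotmem hc2
  have hdeg2 : (minpoly (ℚ⟮lam + lam⁻¹⟯ : IntermediateField ℚ ℝ) lam).natDegree = 2 := by
    omega
  have hfin2 : Module.finrank (ℚ⟮lam + lam⁻¹⟯ : IntermediateField ℚ ℝ)
      ((ℚ⟮lam + lam⁻¹⟯ : IntermediateField ℚ ℝ)⟮lam⟯) = 2 := by
    rw [IntermediateField.adjoin.finrank hintK, hdeg2]
  refine ⟨hfin2, ?_⟩
  -- tower formula
  have hres : ((ℚ⟮lam + lam⁻¹⟯ : IntermediateField ℚ ℝ)⟮lam⟯).restrictScalars ℚ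
      = (ℚ⟮lam⟯ : IntermediateField ℚ ℝ) := by
    erw [IntermediateField.adjoin_simple_adjoin_simple]
    apply le_antisymm
    · rw [IntermediateField.adjoin_le_iff]
      intro x hx
      rcases hx with h | h
      · rw [h]
        exact add_mem (IntermediateField.mem_adjoin_simple_self ℚ lam)
          (inv_mem (IntermediateField.mem_adjoin_simple_self ℚ lam))
      · rw [Set.mem_singleton_iff] at h
        rw [h]
        exact IntermediateField.mem_adjoin_simple_self ℚ lam
    · rw [IntermediateField.adjoin_le_iff]
      intro x hx
      rw [Set.mem_singleton_iff] at hx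
      rw [hx]
      exact IntermediateField.subset_adjoin ℚ _ (by right; rfl)
  have htower := Module.finrank_mul_finrank ℚ (ℚ⟮lam + lam⁻¹⟯ : IntermediateField ℚ ℝ)
    ((ℚ⟮lam + lam⁻¹⟯ : IntermediateField ℚ ℝ)⟮lam⟯)
  have hfr : Module.finrank ℚ
      (((ℚ⟮lam + lam⁻¹⟯ : IntermediateField ℚ ℝ)⟮lam⟯).restrictScalars ℚ)
      = Module.finrank ℚ ((ℚ⟮lam + lam⁻¹⟯ : IntermediateField ℚ ℝ)⟮lam⟯) := rfl
  calc P.natDegree = Module.finrank ℚ (ℚ⟮lam⟯ : IntermediateField ℚ ℝ) :=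
        (IntermediateField.adjoin.finrank hint).symm
    _ = Module.finrank ℚ ((ℚ⟮lam + lam⁻¹⟯ : IntermediateField ℚ ℝ)⟮lam⟯) := by
        rw [← hres, hfr]
    _ = Module.finrank ℚ (ℚ⟮lam + lam⁻¹⟯ : IntermediateField ℚ ℝ) *
        Module.finrank (ℚ⟮lam + lam⁻¹⟯ : IntermediateField ℚ ℝ)
          ((ℚ⟮lam + lam⁻¹⟯ : IntermediateField ℚ ℝ)⟮lam⟯) := htower.symm
    _ = 2 * (minpoly ℚ (lam + lam⁻¹)).natDegree := by
        rw [hfin2, IntermediateField.adjoin.finrank hμint, mul_comm]
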